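/- Let N be a random variable taking values in the nonnegative integers with lim_{n→∞} (log P[N > n]) / (log n) = −a for some a > 0, and let (X_j)_{j≥1} be a sequence of i.i.d. nonnegative random variables, defined on the same probability space as N (with arbitrary dependence between N and the X_j), such that 0 < E[X_1] < ∞ and E[e^{θ X_1}] < ∞ for some θ > 0. Then the random sum S = Σ_{j=1}^{N} X_j satisfies lim_{t→∞} (log P[S > t]) / (log t) = −a. -/

import Mathlib

open MeasureTheory Filter ProbabilityTheory

lemma aux_exp_neg_le {u : ℝ} (hu : 0 ≤ u) : Real.exp (-u) ≤ 1 - u + u ^ 2 := by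
  have h1 : 0 < 1 + u := by linarith
  have h2 : Real.exp (-u) ≤ (1 + u)⁻¹ := by
    rw [Real.exp_neg]
    exact inv_anti₀ h1 (by linarith [Real.add_one_le_exp u])
  refine h2.trans ?_
  rw [inv_le_iff_one_le_mul₀ h1] at *
  nlinarith
  
lemma aux_sq_le_exp {y : ℝ} (hy : 0 ≤ y) : y ^ 2 ≤ 4 * Real.exp y := by
  have h := Real.add_one_le_exp (y / 2)
  have h2 : Real.exp y = Real.exp (y / 2) * Real.exp (y / 2) := by
    rw [← Real.exp_add]; ring_nf
  nlinarith [Real.exp_pos (y / 2)]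

lemma aux_event (A B K : ℝ) (hA : 0 < A) : ∀ᶠ t : ℝ in atTop, B * Real.log t + K ≤ A * t := by
  have hl : Tendsto (fun t : ℝ => Real.log t / t) atTop (nhds 0) :=
    Real.isLittleO_log_id_atTop.tendsto_div_nhds_zero
  have hk : Tendsto (fun t : ℝ => K / t) atTop (nhds 0) :=
    tendsto_const_nhds.div_atTop tendsto_id
  have h0 : Tendsto (fun t : ℝ => (B * Real.log t + K) / t) atTop (nhds 0) := by
    have := (hl.const_mul B).add hk
    rw [mul_zero, add_zero] at this
    refine this.congr' ?_
    filter_upwards [eventually_ne_atTop (0:ℝ)] with t ht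
    field_simp
  filter_upwards [h0.eventually (gt_mem_nhds hA), eventually_gt_atTop (0:ℝ)] with t h1 h2
  rw [div_lt_iff₀ h2] at h1
  linarith [h1]

lemma aux_logdiv {c d : ℝ} (hc : 0 < c) (hd : 0 < d) {f : ℝ → ℝ}
    (hf : ∀ᶠ t : ℝ in atTop, c * t ≤ f t ∧ f t ≤ d * t) :
    Tendsto (fun t => Real.log (f t) / Real.log t) atTop (nhds 1) := by
  have hinv : Tendsto (fun t : ℝ => Real.log t) atTop atTop := Real.tendsto_log_atTop
  have hlow : Tendsto (fun t : ℝ => Real.log c / Real.log t + 1) atTop (nhds 1) := by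
    have := (tendsto_const_nhds (x := Real.log c)).div_atTop hinv
    simpa using this.add tendsto_const_nhds
  have hup : Tendsto (fun t : ℝ => Real.log d / Real.log t + 1) atTop (nhds 1) := by
    have := (tendsto_const_nhds (x := Real.log d)).div_atTop hinv
    simpa using this.add tendsto_const_nhds
  refine tendsto_of_tendsto_of_tendsto_of_le_of_le' hlow hup ?_ ?_
  · filter_upwards [hf, eventually_gt_atTop (1:ℝ)] with t ⟨h1, h2⟩ ht
    have ht0 : (0:ℝ) < t := by linarith
    have hlt : 0 < Real.log t := Real.log_pos ht
    have hct : 0 < c * t := mul_pos hc ht0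
    have : Real.log (c * t) ≤ Real.log (f t) := Real.log_le_log hct h1
    rw [Real.log_mul hc.ne' ht0.ne'] at this
    rw [div_add' _ _ _ hlt.ne', div_le_div_iff₀ hlt hlt]
    nlinarith
  · filter_upwards [hf, eventually_gt_atTop (1:ℝ)] with t ⟨h1, h2⟩ ht
    have ht0 : (0:ℝ) < t := by linarith
    have hlt : 0 < Real.log t := Real.log_pos ht
    have hft : 0 < f t := lt_of_lt_of_le (mul_pos hc ht0) h1
    have : Real.log (f t) ≤ Real.log (d * t) := Real.log_le_log hft h2
    rw [Real.log_mul hd.ne' ht0.ne'] at this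
    rw [div_add' _ _ _ hlt.ne', div_le_div_iff₀ hlt hlt]
    nlinarith

set_option maxHeartbeats 1000000 in
/-- Random-sum tail-transfer principle: if `N` has a power law tail of index `a` and
`(X_j)` are i.i.d. nonnegative light-tailed variables with positive finite mean
(with arbitrary dependence between `N` and the `X_j`), then `S = Σ_{j=1}^N X_j`
has the same logarithmic power law tail. -/
theorem stmt6 {Ω : Type*} {mΩ : MeasurableSpace Ω} (P : Measure Ω) [IsProbabilityMeasure P]
    (N : Ω → ℕ) (hN : Measurable N) (a : ℝ) (ha : 0 < a)
    (hNtail : Tendsto (fun n : ℕ => Real.log (P {ω | N ω > n}).toReal / Real.log n) atTop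
      (nhds (-a)))
    (X : ℕ → Ω → ℝ) (hXm : ∀ j, Measurable (X j)) (hXnn : ∀ j ω, 0 ≤ X j ω)
    (hindep : iIndepFun X P)
    (hident : ∀ j, IdentDistrib (X j) (X 0) P P)
    (hint : Integrable (X 0) P) (hmean : 0 < ∫ ω, X 0 ω ∂P)
    (hmgf : ∃ θ > 0, Integrable (fun ω => Real.exp (θ * X 0 ω)) P) :
    Tendsto (fun t : ℝ =>
        Real.log (P {ω | (∑ j ∈ Finset.range (N ω), X j ω) > t}).toReal / Real.log t)
      atTop (nhds (-a)) := by
  classical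
  obtain ⟨θ, hθ, hθint⟩ := hmgf
  set m := ∫ ω, X 0 ω ∂P with hm_def
  have hid : ∀ (r : ℝ) (j : ℕ), IdentDistrib (fun ω => Real.exp (r * X j ω))
      (fun ω => Real.exp (r * X 0 ω)) P P :=
    fun r j => (hident j).comp ((measurable_id.const_mul r).exp)
  have hintexp : ∀ j, Integrable (fun ω => Real.exp (θ * X j ω)) P :=
    fun j => ((hid θ j).integrable_iff).2 hθint
  have hmgf_eq : ∀ (r : ℝ) (j : ℕ), mgf (X j) P r = mgf (X 0) P r :=
    fun r j => (hid r j).integral_eq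
  set M := mgf (X 0) P θ with hM_def
  have hMpos : 0 < M := mgf_pos hθint
  -- Chernoff upper bound for fixed-length sums
  have hCU : ∀ (n : ℕ) (t : ℝ),
      (P {ω | t ≤ ∑ j ∈ Finset.range n, X j ω}).toReal
        ≤ Real.exp (-θ * t + n * Real.log M) := by
    intro n t
    have hsum_int : Integrable (fun ω => Real.exp (θ * (∑ j ∈ Finset.range n, X j) ω)) P :=
      hindep.integrable_exp_mul_sum hXm fun i _ => hintexp i
    have h := measure_ge_le_exp_mul_mgf (X := ∑ j ∈ Finset.range n, X j) (μ := P) t hθ.le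
      hsum_int
    rw [hindep.mgf_sum hXm] at h
    have hprod : ∏ j ∈ Finset.range n, mgf (X j) P θ = M ^ n := by
      rw [Finset.prod_congr rfl fun j _ => hmgf_eq θ j, Finset.prod_const, Finset.card_range]
    rw [hprod] at h
    simp only [Finset.sum_apply] at h
    refine h.trans (le_of_eq ?_)
    rw [Real.exp_add, Real.exp_nat_mul, Real.exp_log hMpos]
  -- second moment
  have hXsq_int : Integrable (fun ω => X 0 ω ^ 2) P := by
    refine Integrable.mono' (hθint.const_mul (4 / θ ^ 2))
      ((hXm 0).pow_const 2).aestronglyMeasurable (ae_of_all _ fun ω => ?_)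
    have h1 : (θ * X 0 ω) ^ 2 ≤ 4 * Real.exp (θ * X 0 ω) :=
      aux_sq_le_exp (mul_nonneg hθ.le (hXnn 0 ω))
    rw [Real.norm_eq_abs, abs_of_nonneg (sq_nonneg _)]
    have hθ2 : 0 < θ ^ 2 := pow_pos hθ 2
    rw [div_mul_eq_mul_div, le_div_iff₀ hθ2]
    nlinarith
  set K := ∫ ω, X 0 ω ^ 2 ∂P with hK_def
  have hK0 : 0 ≤ K := integral_nonneg fun ω => sq_nonneg _
  set s : ℝ := min (m / (2 * K + 2)) (1 / (m + 1)) with hs_def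
  have hs : 0 < s := lt_min (div_pos hmean (by linarith)) (div_pos one_pos (by linarith))
  have hs1 : s * (m + 1) ≤ 1 := by
    have h1 : s ≤ 1 / (m + 1) := min_le_right _ _
    rw [le_div_iff₀ (by linarith : (0:ℝ) < m + 1)] at h1
    exact h1
  have hsK : s * (2 * K + 2) ≤ m := by
    have h1 : s ≤ m / (2 * K + 2) := min_le_left _ _
    rw [le_div_iff₀ (by linarith : (0:ℝ) < 2 * K + 2)] at h1
    exact h1
  set ρ : ℝ := 1 - s * m / 2 with hρ_def
  have hρ0 : 0 < ρ := by rw [hρ_def]; nlinarith [hs1, hs, hmean]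
  have hρ1 : ρ < 1 := by rw [hρ_def]; nlinarith [mul_pos hs hmean]
  -- mgf at -s is at most ρ
  have hmgf_neg : mgf (X 0) P (-s) ≤ ρ := by
    have hint2a : Integrable (fun ω => 1 - s * X 0 ω) P :=
      (integrable_const 1).sub (hint.const_mul s)
    have hint2b : Integrable (fun ω => (s * X 0 ω) ^ 2) P := by
      simpa [mul_pow] using hXsq_int.const_mul (s ^ 2)
    have hintl : Integrable (fun ω => Real.exp (-s * X 0 ω)) P := by
      refine Integrable.mono' (integrable_const 1)
        ((hXm 0).const_mul (-s)).exp.aestronglyMeasurable (ae_of_all _ fun ω => ?_)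
      rw [Real.norm_eq_abs, abs_of_nonneg (Real.exp_pos _).le, ← Real.exp_zero]
      exact Real.exp_le_exp.2 (by nlinarith [hXnn 0 ω])
    have hle : mgf (X 0) P (-s) ≤ ∫ ω, (1 - s * X 0 ω + (s * X 0 ω) ^ 2) ∂P := by
      have : mgf (X 0) P (-s) = ∫ ω, Real.exp (-s * X 0 ω) ∂P := rfl
      rw [this]
      refine integral_mono hintl (hint2a.add hint2b) fun ω => ?_
      have h2 := aux_exp_neg_le (mul_nonneg hs.le (hXnn 0 ω))
      simpa [neg_mul] using h2
    have hcalc : ∫ ω, (1 - s * X 0 ω + (s * X 0 ω) ^ 2) ∂P = 1 - s * m + s ^ 2 * K := by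
      rw [integral_add hint2a hint2b, integral_sub (integrable_const 1) (hint.const_mul s),
        integral_const, integral_const_mul]
      have : ∫ ω, (s * X 0 ω) ^ 2 ∂P = s ^ 2 * K := by
        simp_rw [mul_pow]
        rw [integral_const_mul]
      rw [this]
      simp [hm_def]
    rw [hcalc] at hle
    rw [hρ_def]
    nlinarith [mul_le_mul_of_nonneg_left hsK hs.le, sq_nonneg s]
  -- Chernoff lower bound for fixed-length sums
  have hCL : ∀ (n : ℕ) (t : ℝ),
      (P {ω | (∑ j ∈ Finset.range n, X j ω) ≤ t}).toReal ≤ Real.exp (s * t) * ρ ^ n := by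
    intro n t
    have hmeas : Measurable fun ω => (∑ j ∈ Finset.range n, X j) ω := by
      simp only [Finset.sum_apply]
      exact Finset.measurable_sum _ fun i _ => hXm i
    have hintn : Integrable (fun ω => Real.exp (-s * (∑ j ∈ Finset.range n, X j) ω)) P := by
      refine Integrable.mono' (integrable_const 1)
        ((hmeas.const_mul (-s)).exp).aestronglyMeasurable
        (ae_of_all _ fun ω => ?_)
      rw [Real.norm_eq_abs, abs_of_nonneg (Real.exp_pos _).le, ← Real.exp_zero]
      refine Real.exp_le_exp.2 ?_
      have h0 : 0 ≤ (∑ j ∈ Finset.range n, X j) ω := by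
        rw [Finset.sum_apply]; exact Finset.sum_nonneg fun j _ => hXnn j ω
      nlinarith
    have h := measure_le_le_exp_mul_mgf (X := ∑ j ∈ Finset.range n, X j) (μ := P) t
      (neg_nonpos.2 hs.le) hintn
    rw [hindep.mgf_sum hXm] at h
    have hprod : ∏ j ∈ Finset.range n, mgf (X j) P (-s) = mgf (X 0) P (-s) ^ n := by
      rw [Finset.prod_congr rfl fun j _ => hmgf_eq (-s) j, Finset.prod_const, Finset.card_range]
    rw [hprod] at h
    simp only [Finset.sum_apply, neg_neg] at h
    refine h.trans ?_
    exact mul_le_mul_of_nonneg_left (pow_le_pow_left₀ mgf_nonneg hmgf_neg n) (Real.exp_pos _).le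
  -- positivity of N-tail
  have hNpos : ∀ n : ℕ, 0 < (P {ω | N ω > n}).toReal := by
    by_contra h
    push_neg at h
    obtain ⟨n₀, hn₀⟩ := h
    have hz : P {ω | N ω > n₀} = 0 := by
      have h1 := ENNReal.toReal_nonneg (a := P {ω | N ω > n₀})
      have h2 : (P {ω | N ω > n₀}).toReal = 0 := le_antisymm hn₀ h1
      exact ((ENNReal.toReal_eq_zero_iff _).1 h2).resolve_right (measure_ne_top P _)
    have hev : ∀ᶠ n : ℕ in atTop,
        Real.log (P {ω | N ω > n}).toReal / Real.log n = 0 := by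
      filter_upwards [eventually_ge_atTop n₀] with n hn
      have : P {ω | N ω > n} = 0 :=
        le_antisymm (le_trans (measure_mono fun ω hω => lt_of_le_of_lt hn hω) hz.le) (by simp)
      simp [this]
    have h3 : Tendsto (fun _ : ℕ => (0:ℝ)) atTop (nhds (-a)) :=
      Tendsto.congr' hev hNtail
    have := tendsto_nhds_unique h3 tendsto_const_nhds
    linarith
  -- tail estimates for N
  have htail : ∀ ε : ℝ, 0 < ε → ∀ᶠ n : ℕ in atTop,
      Real.log (P {ω | N ω > n}).toReal ≤ (-a + ε) * Real.log n ∧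
      (-a - ε) * Real.log n ≤ Real.log (P {ω | N ω > n}).toReal := by
    intro ε hε
    filter_upwards [Metric.tendsto_nhds.1 hNtail ε hε, eventually_ge_atTop 2] with n h1 h2
    have hn1 : (1:ℝ) < (n:ℝ) := by exact_mod_cast Nat.lt_of_lt_of_le one_lt_two h2
    have hlog : 0 < Real.log n := Real.log_pos hn1
    rw [Real.dist_eq, abs_lt] at h1
    have heq : Real.log (P {ω | N ω > n}).toReal
        = (Real.log (P {ω | N ω > n}).toReal / Real.log n) * Real.log n :=
      (div_mul_cancel₀ _ hlog.ne').symm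
    constructor
    · rw [heq]; nlinarith [h1.2]
    · rw [heq]; nlinarith [h1.1]
  -- constants
  set c : ℝ := θ / (2 * (|Real.log M| + 1)) with hc_def
  have habs : (0:ℝ) < |Real.log M| + 1 := by positivity
  have hc : 0 < c := div_pos hθ (by positivity)
  have hcM : c * (|Real.log M| + 1) = θ / 2 := by
    rw [hc_def, ← div_div, div_mul_cancel₀ _ habs.ne']
  have hlogρ : Real.log ρ < 0 := Real.log_neg hρ0 hρ1
  set C : ℝ := (s + 1) / (-Real.log ρ) with hC_def
  have hC : 0 < C := div_pos (by linarith) (by linarith)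
  have hClogρ : C * Real.log ρ = -(s + 1) := by
    have hne : -Real.log ρ ≠ 0 := ne_of_gt (by linarith)
    rw [hC_def, div_mul_eq_mul_div, div_eq_iff hne]
    ring
  have hfloor_tendsto : Tendsto (fun t : ℝ => ⌊c * t⌋₊) atTop atTop :=
    tendsto_nat_floor_atTop.comp (Tendsto.const_mul_atTop hc tendsto_id)
  have hceil_tendsto : Tendsto (fun t : ℝ => ⌈C * t⌉₊) atTop atTop :=
    tendsto_nat_ceil_atTop.comp (Tendsto.const_mul_atTop hC tendsto_id)
  have hfb : ∀ᶠ t : ℝ in atTop, c / 2 * t ≤ (⌊c * t⌋₊ : ℝ) ∧ (⌊c * t⌋₊ : ℝ) ≤ c * t := by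
    filter_upwards [eventually_ge_atTop (2 / c)] with t ht
    have hct : 2 ≤ c * t := by rw [div_le_iff₀ hc] at ht; linarith
    have h0 : (0:ℝ) ≤ c * t := by linarith
    refine ⟨?_, Nat.floor_le h0⟩
    have h1 := Nat.sub_one_lt_floor (c * t)
    linarith
  have hcb : ∀ᶠ t : ℝ in atTop, C * t ≤ (⌈C * t⌉₊ : ℝ) ∧ (⌈C * t⌉₊ : ℝ) ≤ 2 * C * t := by
    filter_upwards [eventually_ge_atTop (1 / C)] with t ht
    have hCt : 1 ≤ C * t := by rw [div_le_iff₀ hC] at ht; linarith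
    refine ⟨Nat.le_ceil _, ?_⟩
    have h1 := Nat.ceil_lt_add_one (by linarith : (0:ℝ) ≤ C * t)
    linarith
  have hlogn_fl : Tendsto (fun t : ℝ => Real.log (⌊c * t⌋₊ : ℝ) / Real.log t) atTop (nhds 1) :=
    aux_logdiv (by positivity) hc hfb
  have hlogn_ce : Tendsto (fun t : ℝ => Real.log (⌈C * t⌉₊ : ℝ) / Real.log t) atTop (nhds 1) :=
    aux_logdiv hC (by positivity) hcb
  -- upper inclusion estimate
  have hUB1 : ∀ᶠ t : ℝ in atTop,
      (P {ω | (∑ j ∈ Finset.range (N ω), X j ω) > t}).toReal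
        ≤ (P {ω | N ω > ⌊c * t⌋₊}).toReal + Real.exp (-(θ / 2) * t) := by
    filter_upwards [hfb, eventually_gt_atTop (0:ℝ)] with t hf ht0
    set n := ⌊c * t⌋₊ with hn_def
    have hsub : {ω | (∑ j ∈ Finset.range (N ω), X j ω) > t}
        ⊆ {ω | N ω > n} ∪ {ω | t ≤ ∑ j ∈ Finset.range n, X j ω} := by
      intro ω hω
      by_cases hn : N ω > n
      · exact Or.inl hn
      · push_neg at hn
        exact Or.inr (le_trans (le_of_lt hω) (Finset.sum_le_sum_of_subset_of_nonneg
          (Finset.range_subset_range.2 hn) fun j _ _ => hXnn j ω))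
    have h1 : (P {ω | (∑ j ∈ Finset.range (N ω), X j ω) > t}).toReal
        ≤ (P {ω | N ω > n}).toReal + (P {ω | t ≤ ∑ j ∈ Finset.range n, X j ω}).toReal := by
      rw [← ENNReal.toReal_add (measure_ne_top P _) (measure_ne_top P _)]
      exact ENNReal.toReal_mono
        (ENNReal.add_ne_top.2 ⟨measure_ne_top P _, measure_ne_top P _⟩)
        ((measure_mono hsub).trans (measure_union_le _ _))
    refine h1.trans (add_le_add le_rfl ((hCU n t).trans ?_))
    rw [Real.exp_le_exp]
    have h2 : (n : ℝ) ≤ c * t := hf.2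
    have h3 : (n:ℝ) * Real.log M ≤ (n:ℝ) * |Real.log M| :=
      mul_le_mul_of_nonneg_left (le_abs_self _) (Nat.cast_nonneg n)
    have h4 : (n:ℝ) * |Real.log M| ≤ c * t * |Real.log M| :=
      mul_le_mul_of_nonneg_right h2 (abs_nonneg _)
    have h5 : c * t * |Real.log M| ≤ c * t * (|Real.log M| + 1) :=
      mul_le_mul_of_nonneg_left (by linarith) (by positivity)
    have h6 : c * t * (|Real.log M| + 1) = θ / 2 * t := by rw [← hcM]; ring
    linarith
  -- lower inclusion estimate
  have hLB1 : ∀ᶠ t : ℝ in atTop,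
      (P {ω | N ω > ⌈C * t⌉₊}).toReal
        ≤ (P {ω | (∑ j ∈ Finset.range (N ω), X j ω) > t}).toReal + Real.exp (-t) := by
    filter_upwards [hcb, eventually_gt_atTop (0:ℝ)] with t hce ht0
    set n := ⌈C * t⌉₊ with hn_def
    have hsub : {ω | N ω > n} ⊆ {ω | (∑ j ∈ Finset.range (N ω), X j ω) > t}
        ∪ {ω | (∑ j ∈ Finset.range n, X j ω) ≤ t} := by
      intro ω hω
      by_cases hl : (∑ j ∈ Finset.range n, X j ω) ≤ t
      · exact Or.inr hl
      · push_neg at hl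
        exact Or.inl (lt_of_lt_of_le hl (Finset.sum_le_sum_of_subset_of_nonneg
          (Finset.range_subset_range.2 (le_of_lt hω)) fun j _ _ => hXnn j ω))
    have h1 : (P {ω | N ω > n}).toReal
        ≤ (P {ω | (∑ j ∈ Finset.range (N ω), X j ω) > t}).toReal
          + (P {ω | (∑ j ∈ Finset.range n, X j ω) ≤ t}).toReal := by
      rw [← ENNReal.toReal_add (measure_ne_top P _) (measure_ne_top P _)]
      exact ENNReal.toReal_mono
        (ENNReal.add_ne_top.2 ⟨measure_ne_top P _, measure_ne_top P _⟩)
        ((measure_mono hsub).trans (measure_union_le _ _))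
    refine h1.trans (add_le_add le_rfl ((hCL n t).trans ?_))
    rw [← Real.exp_log hρ0, ← Real.exp_nat_mul, ← Real.exp_add, Real.exp_le_exp]
    have h2 : C * t ≤ (n : ℝ) := hce.1
    have h3 : (n:ℝ) * Real.log ρ ≤ C * t * Real.log ρ :=
      mul_le_mul_of_nonpos_right h2 hlogρ.le
    have h4 : C * t * Real.log ρ = -(s + 1) * t := by
      rw [show C * t * Real.log ρ = C * Real.log ρ * t by ring, hClogρ]
    linarith
  -- exponential terms are eventually dominated by the N-tail
  have hsmall1 : ∀ᶠ t : ℝ in atTop,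
      Real.exp (-(θ / 2) * t) ≤ (P {ω | N ω > ⌊c * t⌋₊}).toReal := by
    filter_upwards [hfloor_tendsto.eventually (htail 1 one_pos), hfb,
      aux_event (θ / 2) (a + 1) ((a + 1) * Real.log c) (by linarith),
      eventually_gt_atTop (0:ℝ),
      hfloor_tendsto.eventually (eventually_ge_atTop 1)] with t h9 hf he ht0 hn1
    set n := ⌊c * t⌋₊ with hn_def
    have hnpos : (1:ℝ) ≤ (n:ℝ) := by exact_mod_cast hn1
    have hlogn0 : 0 ≤ Real.log (n:ℝ) := Real.log_nonneg hnpos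
    have hlogn : Real.log (n:ℝ) ≤ Real.log c + Real.log t := by
      rw [← Real.log_mul hc.ne' (ne_of_gt ht0)]
      exact Real.log_le_log (by linarith) hf.2
    have h10 : (a + 1) * Real.log (n:ℝ) ≤ θ / 2 * t := by nlinarith
    have h11 : Real.exp ((-a - 1) * Real.log (n:ℝ)) ≤ (P {ω | N ω > n}).toReal := by
      calc Real.exp ((-a - 1) * Real.log (n:ℝ))
          ≤ Real.exp (Real.log (P {ω | N ω > n}).toReal) := Real.exp_le_exp.2 h9.2
        _ = _ := Real.exp_log (hNpos n)
    refine le_trans ?_ h11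
    rw [Real.exp_le_exp]
    nlinarith
  have hsmall2 : ∀ᶠ t : ℝ in atTop,
      Real.exp (-t) ≤ 1 / 2 * (P {ω | N ω > ⌈C * t⌉₊}).toReal := by
    filter_upwards [hceil_tendsto.eventually (htail 1 one_pos), hcb,
      aux_event 1 (a + 1) ((a + 1) * Real.log (2 * C) + Real.log 2) one_pos,
      eventually_gt_atTop (0:ℝ),
      hceil_tendsto.eventually (eventually_ge_atTop 1)] with t h9 hce he ht0 hn1
    set n := ⌈C * t⌉₊ with hn_def
    have hnpos : (1:ℝ) ≤ (n:ℝ) := by exact_mod_cast hn1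
    have hlogn0 : 0 ≤ Real.log (n:ℝ) := Real.log_nonneg hnpos
    have hlogn : Real.log (n:ℝ) ≤ Real.log (2 * C) + Real.log t := by
      rw [← Real.log_mul (by positivity : (2:ℝ) * C ≠ 0) (ne_of_gt ht0)]
      exact Real.log_le_log (by linarith) hce.2
    have h10 : (a + 1) * Real.log (n:ℝ) + Real.log 2 ≤ t := by nlinarith
    have h11 : Real.exp ((-a - 1) * Real.log (n:ℝ)) ≤ (P {ω | N ω > n}).toReal := by
      calc Real.exp ((-a - 1) * Real.log (n:ℝ))
          ≤ Real.exp (Real.log (P {ω | N ω > n}).toReal) := Real.exp_le_exp.2 h9.2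
        _ = _ := Real.exp_log (hNpos n)
    have h12 : Real.exp (-t) ≤ 1 / 2 * Real.exp ((-a - 1) * Real.log (n:ℝ)) := by
      have : 1 / 2 * Real.exp ((-a - 1) * Real.log (n:ℝ))
          = Real.exp ((-a - 1) * Real.log (n:ℝ) - Real.log 2) := by
        rw [Real.exp_sub, Real.exp_log two_pos]; ring
      rw [this, Real.exp_le_exp]
      linarith
    refine h12.trans ?_
    linarith
  -- conclusion
  rw [Metric.tendsto_nhds]
  intro ε hε
  set ε' := min (ε / 2) (a / 2) with hε'_def
  have hε' : 0 < ε' := lt_min (by linarith) (by linarith)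
  have hε'2 : ε' < ε := lt_of_le_of_lt (min_le_left _ _) (by linarith)
  have hRup : Tendsto (fun t : ℝ => (-a + ε') * (Real.log (⌊c * t⌋₊ : ℝ) / Real.log t)
      + Real.log 2 / Real.log t) atTop (nhds (-a + ε')) := by
    have h := (hlogn_fl.const_mul (-a + ε')).add
      ((tendsto_const_nhds (x := Real.log 2)).div_atTop Real.tendsto_log_atTop)
    simpa using h
  have hRlo : Tendsto (fun t : ℝ => (-a - ε') * (Real.log (⌈C * t⌉₊ : ℝ) / Real.log t)
      - Real.log 2 / Real.log t) atTop (nhds (-a - ε')) := by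
    have h := (hlogn_ce.const_mul (-a - ε')).sub
      ((tendsto_const_nhds (x := Real.log 2)).div_atTop Real.tendsto_log_atTop)
    simpa using h
  have hev_up := hRup.eventually (gt_mem_nhds (show -a + ε' < -a + ε by linarith))
  have hev_lo := hRlo.eventually (lt_mem_nhds (show -a - ε < -a - ε' by linarith))
  filter_upwards [hUB1, hLB1, hsmall1, hsmall2,
    hfloor_tendsto.eventually (htail ε' hε'),
    hceil_tendsto.eventually (htail ε' hε'),
    hev_up, hev_lo, eventually_gt_atTop (1:ℝ)] with t hub hlb hsm1 hsm2 htf htc hup hlo ht1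
  have hLt : 0 < Real.log t := Real.log_pos ht1
  set p := (P {ω | (∑ j ∈ Finset.range (N ω), X j ω) > t}).toReal with hp_def
  set q := (P {ω | N ω > ⌊c * t⌋₊}).toReal with hq_def
  set r := (P {ω | N ω > ⌈C * t⌉₊}).toReal with hr_def
  have hq0 : 0 < q := hNpos _
  have hr0 : 0 < r := hNpos _
  -- positivity and lower bound for p
  have hp_lb : r / 2 ≤ p := by
    have := hlb
    have h2 : Real.exp (-t) ≤ 1 / 2 * r := hsm2
    linarith
  have hp0 : 0 < p := lt_of_lt_of_le (by linarith) hp_lb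
  -- upper bound for p
  have hp_ub : p ≤ 2 * q := by
    have h2 : Real.exp (-(θ / 2) * t) ≤ q := hsm1
    linarith
  -- upper log bound
  have hlog_up : Real.log p ≤ Real.log 2 + (-a + ε') * Real.log (⌊c * t⌋₊ : ℝ) := by
    calc Real.log p ≤ Real.log (2 * q) := Real.log_le_log hp0 hp_ub
      _ = Real.log 2 + Real.log q := Real.log_mul two_ne_zero hq0.ne'
      _ ≤ Real.log 2 + (-a + ε') * Real.log (⌊c * t⌋₊ : ℝ) := by linarith [htf.1]
  have hlog_lo : (-a - ε') * Real.log (⌈C * t⌉₊ : ℝ) - Real.log 2 ≤ Real.log p := by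
    calc (-a - ε') * Real.log (⌈C * t⌉₊ : ℝ) - Real.log 2
        ≤ Real.log r - Real.log 2 := by linarith [htc.2]
      _ = Real.log (r / 2) := (Real.log_div hr0.ne' two_ne_zero).symm
      _ ≤ Real.log p := Real.log_le_log (by positivity) hp_lb
  -- divide by log t
  have hdiv_up : Real.log p / Real.log t
      ≤ (-a + ε') * (Real.log (⌊c * t⌋₊ : ℝ) / Real.log t) + Real.log 2 / Real.log t := by
    have h1 : Real.log p / Real.log t
        ≤ (Real.log 2 + (-a + ε') * Real.log (⌊c * t⌋₊ : ℝ)) / Real.log t := by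
      exact div_le_div_of_nonneg_right hlog_up hLt.le
    refine h1.trans (le_of_eq ?_)
    rw [add_div, mul_div_assoc]
    ring
  have hdiv_lo : (-a - ε') * (Real.log (⌈C * t⌉₊ : ℝ) / Real.log t) - Real.log 2 / Real.log t
      ≤ Real.log p / Real.log t := by
    have h1 : ((-a - ε') * Real.log (⌈C * t⌉₊ : ℝ) - Real.log 2) / Real.log t
        ≤ Real.log p / Real.log t := div_le_div_of_nonneg_right hlog_lo hLt.le
    refine le_trans (le_of_eq ?_) h1
    rw [sub_div, mul_div_assoc]
  rw [Real.dist_eq, abs_lt]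
  constructor
  · have := hdiv_lo.trans' (le_of_lt hlo)
    linarith
  · have := hdiv_up.trans (le_of_lt hup)
    linarith
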